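/- Let a,b ∈ ℤ³, let i,j ∈ {1,2,3} be distinct, let k,l ∈ {1,2,3} be distinct, and let m be the unique index with {i,j,m} = {1,2,3}. Then π(T(a;i,j)) = π(T(b;k,l)) if and only if there exists n ∈ ℤ such that the pair (b,(k,l)) equals (a + n𝟙, (i,j)), or (a + eᵢ + n𝟙, (j,m)), or (a − e_m + n𝟙, (m,i)). In particular, up to translation by integer multiples of 𝟙, exactly three slant triangles project onto any given flat triangle. -/

import Mathlib

noncomputable section

/-- Ambient space ℝ³. -/
abbrev E3 := EuclideanSpace ℝ (Fin 3)

/-- Standard basis vector eᵢ of ℝ³. -/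
def ee3 (i : Fin 3) : E3 := EuclideanSpace.single i 1

/-- 𝟙 = e₁ + e₂ + e₃. -/
def ones3 : E3 := ∑ i, ee3 i

/-- Orthogonal projection π onto the hyperplane H = {v ∈ ℝ³ : v₁+v₂+v₃ = 0},
    given by π(v) = v − ((v₁+v₂+v₃)/3)·𝟙. -/
def proj3 (v : E3) : E3 := v - ((∑ i, v i) / 3) • ones3

/-- A lattice point of ℤ³ viewed in ℝ³. -/
def toE3 (a : Fin 3 → ℤ) : E3 := WithLp.toLp 2 (fun n => (a n : ℝ))

/-- Slant triangle T(a;i,j) = conv{a, a+eᵢ, a+eᵢ+eⱼ}. -/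
def slant3 (a : Fin 3 → ℤ) (i j : Fin 3) : Set E3 :=
  convexHull ℝ {toE3 a, toE3 a + ee3 i, toE3 a + ee3 i + ee3 j}

/-- Flat triangle: the image π(T(a;i,j)). -/
def flat3 (a : Fin 3 → ℤ) (i j : Fin 3) : Set E3 := proj3 '' slant3 a i j

/-! ### Auxiliary material -/

section Aux

open Finset in
lemma range_subset_of_hull_eq {ι : Type*} [Fintype ι] {V : Type*} [AddCommGroup V] [Module ℝ V]
    (b c : AffineBasis ι ℝ V)
    (h : convexHull ℝ (Set.range b) = convexHull ℝ (Set.range c)) :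
    Set.range b ⊆ Set.range c := by
  rintro x ⟨i, rfl⟩
  have hx : b i ∈ convexHull ℝ (Set.range c) := by
    rw [← h]; exact subset_convexHull ℝ _ (Set.mem_range_self i)
  have hw0 : ∀ j, 0 ≤ c.coord j (b i) := by
    rw [c.convexHull_eq_nonneg_coord] at hx; exact hx
  have hw1 : ∑ j, c.coord j (b i) = 1 := c.sum_coord_apply_eq_one _
  have hcj : ∀ j t, 0 ≤ b.coord t (c j) := by
    intro j t
    have : c j ∈ convexHull ℝ (Set.range b) := by
      rw [h]; exact subset_convexHull ℝ _ (Set.mem_range_self j)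
    rw [b.convexHull_eq_nonneg_coord] at this; exact this t
  have hcj1 : ∀ j, ∑ t, b.coord t (c j) = 1 := fun j => b.sum_coord_apply_eq_one _
  have hcjle : ∀ j, b.coord i (c j) ≤ 1 := by
    intro j
    rw [← hcj1 j]
    exact Finset.single_le_sum (fun t _ => hcj j t) (Finset.mem_univ i)
  have hself : b i = Finset.univ.affineCombination ℝ c (fun j => c.coord j (b i)) :=
    (c.affineCombination_coord_eq_self _).symm
  have key : (1:ℝ) = ∑ j, c.coord j (b i) * b.coord i (c j) := by
    have := congrArg (b.coord i) hself
    rw [b.coord_apply_eq] at this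
    rw [Finset.map_affineCombination _ _ _ hw1] at this
    rw [Finset.univ.affineCombination_eq_linear_combination _ _ hw1] at this
    simpa [smul_eq_mul] using this
  have hzero : ∑ j, c.coord j (b i) * (1 - b.coord i (c j)) = 0 := by
    have : ∑ j, c.coord j (b i) * (1 - b.coord i (c j))
        = (∑ j, c.coord j (b i)) - ∑ j, c.coord j (b i) * b.coord i (c j) := by
      rw [← Finset.sum_sub_distrib]; congr 1; ext j; ring
    rw [this, hw1, ← key, sub_self]
  have hterms : ∀ j ∈ Finset.univ, c.coord j (b i) * (1 - b.coord i (c j)) = 0 :=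
    (Finset.sum_eq_zero_iff_of_nonneg
      (fun j _ => mul_nonneg (hw0 j) (by linarith [hcjle j]))).1 hzero
  obtain ⟨j, hj⟩ : ∃ j, c.coord j (b i) ≠ 0 := by
    by_contra hc
    push_neg at hc
    rw [Finset.sum_eq_zero (fun j _ => hc j)] at hw1
    norm_num at hw1
  have hj1 : b.coord i (c j) = 1 := by
    have := hterms j (Finset.mem_univ j)
    rcases mul_eq_zero.1 this with h' | h'
    · exact absurd h' hj
    · linarith
  classical
  refine ⟨j, ?_⟩
  apply b.ext_elem
  intro t
  rw [show (b.coord t) (b i) = if t = i then 1 else 0 from b.coord_apply t i]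
  by_cases ht : t = i
  · subst ht; simpa using hj1
  · simp only [ht, if_neg]
    have hsum := hcj1 j
    have : ∑ t' ∈ Finset.univ.erase i, b.coord t' (c j) = 0 := by
      have h2 := Finset.add_sum_erase Finset.univ (fun t' => b.coord t' (c j)) (Finset.mem_univ i)
      rw [hj1] at h2
      linarith
    have := (Finset.sum_eq_zero_iff_of_nonneg (fun t' _ => hcj j t')).1 this t
      (Finset.mem_erase.2 ⟨ht, Finset.mem_univ t⟩)
    simpa [ht] using this

lemma range_eq_of_hull_eq {ι : Type*} [Fintype ι] {V : Type*} [AddCommGroup V] [Module ℝ V]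
    (b c : AffineBasis ι ℝ V)
    (h : convexHull ℝ (Set.range b) = convexHull ℝ (Set.range c)) :
    Set.range b = Set.range c :=
  (range_subset_of_hull_eq b c h).antisymm (range_subset_of_hull_eq c b h.symm)

abbrev V2 := Fin 2 → ℝ

lemma triInd (A u v : V2) (h : u 0 * v 1 - u 1 * v 0 ≠ 0) :
    AffineIndependent ℝ ![A, A + u, A + u + v] := by
  rw [affineIndependent_iff_of_fintype]
  intro w hw hcomb
  rw [Finset.weightedVSub_eq_linear_combination _ hw] at hcomb
  have hsum : ∑ i, w i = w 0 + w 1 + w 2 := by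
    simp [Fin.sum_univ_three]
  have hcomb' : (w 1 + w 2) • u + w 2 • v = 0 := by
    have : ∑ i, w i • ![A, A + u, A + u + v] i
        = (w 0 + w 1 + w 2) • A + (w 1 + w 2) • u + w 2 • v := by
      simp [Fin.sum_univ_three, smul_add, add_smul]
      try abel
    rw [this] at hcomb
    rw [hsum] at hw
    rw [hw, zero_smul, zero_add] at hcomb
    exact hcomb
  have h0 := congrFun hcomb' 0
  have h1 := congrFun hcomb' 1
  simp only [Pi.add_apply, Pi.smul_apply, smul_eq_mul, Pi.zero_apply] at h0 h1
  have hα : w 1 + w 2 = 0 := by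
    have : (w 1 + w 2) * (u 0 * v 1 - u 1 * v 0) = 0 := by linear_combination v 1 * h0 - v 0 * h1
    exact (mul_eq_zero.1 this).resolve_right h
  have hβ : w 2 = 0 := by
    have : w 2 * (u 0 * v 1 - u 1 * v 0) = 0 := by linear_combination u 0 * h1 - u 1 * h0
    exact (mul_eq_zero.1 this).resolve_right h
  rw [hsum] at hw
  intro i
  fin_cases i <;> simp <;> linarith

def triBasis (A u v : V2) (h : u 0 * v 1 - u 1 * v 0 ≠ 0) : AffineBasis (Fin 3) ℝ V2 where
  toFun := ![A, A + u, A + u + v]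
  ind' := triInd A u v h
  tot' := by
    rw [(triInd A u v h).affineSpan_eq_top_iff_card_eq_finrank_add_one]
    simp [Module.finrank_pi]

lemma triBasis_range (A u v : V2) (h : u 0 * v 1 - u 1 * v 0 ≠ 0) :
    Set.range (triBasis A u v h) = {A, A + u, A + u + v} := by
  show Set.range ![A, A + u, A + u + v] = _
  ext x
  constructor
  · rintro ⟨i, rfl⟩
    fin_cases i <;> simp [triBasis]
  · rintro (rfl | rfl | rfl)
    exacts [⟨0, rfl⟩, ⟨1, rfl⟩, ⟨2, rfl⟩]

def phiL : E3 →ₗ[ℝ] V2 where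
  toFun v := ![v 0 - v 2, v 1 - v 2]
  map_add' x y := by
    funext t
    fin_cases t <;> simp [PiLp.add_apply] <;> ring
  map_smul' r x := by
    funext t
    fin_cases t <;> simp [PiLp.smul_apply, smul_eq_mul] <;> ring

def psiL : V2 →ₗ[ℝ] E3 where
  toFun w := WithLp.toLp 2 (![(2 * w 0 - w 1) / 3, (2 * w 1 - w 0) / 3, -(w 0 + w 1) / 3] : Fin 3 → ℝ)
  map_add' x y := by
    ext t
    fin_cases t <;> simp [PiLp.add_apply] <;> ring
  map_smul' r x := by
    ext t
    fin_cases t <;> simp [PiLp.smul_apply, smul_eq_mul] <;> ring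

lemma ones3_apply (t : Fin 3) : ones3 t = 1 := by
  fin_cases t <;>
    simp [ones3, ee3, Fin.sum_univ_three, EuclideanSpace.single_apply]

lemma psiL_inj : Function.Injective psiL := by
  intro x y h
  have h0 := congrArg (fun v : E3 => v 0) h
  have h1 := congrArg (fun v : E3 => v 1) h
  simp [psiL] at h0 h1
  funext t
  fin_cases t
  · show x 0 = y 0; linarith
  · show x 1 = y 1; linarith

lemma proj3_eq (v : E3) : proj3 v = psiL (phiL v) := by
  ext t
  have : proj3 v t = v t - ((v 0 + v 1 + v 2) / 3) * ones3 t := by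
    simp [proj3, PiLp.sub_apply, PiLp.smul_apply, smul_eq_mul, Fin.sum_univ_three]
  fin_cases t <;> rw [this] <;> rw [ones3_apply] <;> simp [psiL, phiL] <;> ring

def Uv : Fin 3 → V2 := ![![1, 0], ![0, 1], ![-1, -1]]

def Phi (x : Fin 3 → ℤ) : V2 := ![(x 0 : ℝ) - x 2, (x 1 : ℝ) - x 2]

lemma phiL_toE3 (x : Fin 3 → ℤ) : phiL (toE3 x) = Phi x := by
  funext t; fin_cases t <;> simp [phiL, toE3, Phi]

lemma phiL_ee3 (i : Fin 3) : phiL (ee3 i) = Uv i := by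
  fin_cases i <;> (funext t; fin_cases t) <;>
    simp [phiL, ee3, Uv, EuclideanSpace.single_apply]

lemma flat3_iff_hull (a : Fin 3 → ℤ) (i j : Fin 3) :
    flat3 a i j = psiL '' (convexHull ℝ {Phi a, Phi a + Uv i, Phi a + Uv i + Uv j}) := by
  unfold flat3 slant3
  have hc : proj3 = fun v => psiL (phiL v) := funext proj3_eq
  rw [hc]
  rw [show (fun v => psiL (phiL v)) = (psiL ∘ phiL) from rfl, Set.image_comp]
  congr 1
  rw [phiL.image_convexHull]
  congr 2
  simp only [Set.image_insert_eq, Set.image_singleton, map_add, phiL_toE3, phiL_ee3]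

lemma flat3_eq_iff (a b : Fin 3 → ℤ) (i j k l : Fin 3) :
    flat3 a i j = flat3 b k l ↔
      convexHull ℝ {Phi a, Phi a + Uv i, Phi a + Uv i + Uv j}
        = convexHull ℝ {Phi b, Phi b + Uv k, Phi b + Uv k + Uv l} := by
  rw [flat3_iff_hull, flat3_iff_hull, Set.image_eq_image psiL_inj]

lemma hdet (i j : Fin 3) (hij : i ≠ j) : Uv i 0 * Uv j 1 - Uv i 1 * Uv j 0 ≠ 0 := by
  fin_cases i <;> fin_cases j <;> simp_all [Uv]

lemma hull_tri_iff (A B : V2) (i j k l : Fin 3) (hij : i ≠ j) (hkl : k ≠ l) :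
    convexHull ℝ ({A, A + Uv i, A + Uv i + Uv j} : Set V2)
      = convexHull ℝ ({B, B + Uv k, B + Uv k + Uv l} : Set V2) ↔
    ({A, A + Uv i, A + Uv i + Uv j} : Set V2) = {B, B + Uv k, B + Uv k + Uv l} := by
  constructor
  · intro h
    have := range_eq_of_hull_eq (triBasis A (Uv i) (Uv j) (hdet i j hij))
      (triBasis B (Uv k) (Uv l) (hdet k l hkl))
      (by rw [triBasis_range, triBasis_range]; exact h)
    rwa [triBasis_range, triBasis_range] at this
  · intro h; rw [h]

lemma Phi_eq_iff (x y : Fin 3 → ℤ) :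
    Phi x = Phi y ↔ ∃ n : ℤ, y = x + (n : Fin 3 → ℤ) := by
  constructor
  · intro h
    have h0 := congrFun h 0
    have h1 := congrFun h 1
    simp only [Phi, Matrix.cons_val_zero, Matrix.cons_val_one, Matrix.head_cons] at h0 h1
    have e0 : x 0 - x 2 = y 0 - y 2 := by exact_mod_cast h0
    have e1 : x 1 - x 2 = y 1 - y 2 := by exact_mod_cast h1
    refine ⟨y 2 - x 2, ?_⟩
    funext t
    have ht : t = 0 ∨ t = 1 ∨ t = 2 := by omega
    rcases ht with rfl | rfl | rfl <;>
      simp only [Pi.add_apply, Pi.intCast_apply, Int.cast_id] <;> omega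
  · rintro ⟨n, rfl⟩
    funext t
    fin_cases t <;> simp [Phi, Pi.intCast_apply] <;> push_cast <;> ring

lemma Phi_add_single (x : Fin 3 → ℤ) (i : Fin 3) :
    Phi (x + Pi.single i 1) = Phi x + Uv i := by
  fin_cases i <;> (funext t; fin_cases t) <;>
    simp [Phi, Uv, Pi.single_apply] <;> push_cast <;> ring

lemma exists_third (k i : Fin 3) : ∃ t, t ≠ k ∧ t ≠ i := by
  revert k i; decide

lemma L0 (k : Fin 3) (c : ℤ) : Pi.single k (1:ℤ) ≠ (c : Fin 3 → ℤ) := by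
  intro h
  obtain ⟨t, htk, -⟩ := exists_third k k
  have h1 := congrFun h k
  have h2 := congrFun h t
  simp [Pi.single_apply, htk] at h1 h2
  omega

lemma L5 (k l : Fin 3) (c : ℤ) (hkl : k ≠ l) :
    Pi.single k (1:ℤ) + Pi.single l 1 ≠ (c : Fin 3 → ℤ) := by
  intro h
  obtain ⟨t, htk, htl⟩ := exists_third k l
  have h1 := congrFun h k
  have h2 := congrFun h t
  simp [Pi.single_apply, htk, htl, hkl, (Ne.symm hkl)] at h1 h2
  omega

lemma L1 (k i : Fin 3) (c : ℤ)
    (h : Pi.single k (1:ℤ) = Pi.single i 1 + (c : Fin 3 → ℤ)) : k = i ∧ c = 0 := by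
  by_cases hki : k = i
  · subst hki
    have h1 := congrFun h k
    simp [Pi.single_apply] at h1
    exact ⟨rfl, by omega⟩
  · exfalso
    have h1 := congrFun h k
    have h2 := congrFun h i
    simp [Pi.single_apply, hki, Ne.symm hki] at h1 h2
    omega

lemma L2 (k i : Fin 3) (c : ℤ) :
    Pi.single k (1:ℤ) ≠ -Pi.single i 1 + (c : Fin 3 → ℤ) := by
  intro h
  obtain ⟨t, htk, hti⟩ := exists_third k i
  have h1 := congrFun h k
  have h2 := congrFun h i
  have h3 := congrFun h t
  by_cases hki : k = i
  · subst hki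
    simp [Pi.single_apply, htk] at h1 h3
    omega
  · simp [Pi.single_apply, hki, Ne.symm hki, htk, hti] at h1 h2 h3
    omega

lemma L3 (k i j : Fin 3) (c : ℤ) (hij : i ≠ j) :
    Pi.single k (1:ℤ) ≠ Pi.single i 1 + Pi.single j 1 + (c : Fin 3 → ℤ) := by
  intro h
  have h1 := congrFun h k
  have h2 := congrFun h i
  have h3 := congrFun h j
  by_cases hki : k = i
  · subst hki
    simp [Pi.single_apply, hij, Ne.symm hij] at h1 h3
    omega
  · by_cases hkj : k = j
    · subst hkj
      simp [Pi.single_apply, hij, Ne.symm hij, hki] at h1 h2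
      omega
    · simp [Pi.single_apply, hij, Ne.symm hij, hki, hkj, Ne.symm hki, Ne.symm hkj] at h1 h2 h3
      omega

lemma L4 (k i j : Fin 3) (c : ℤ) (hij : i ≠ j)
    (h : Pi.single k (1:ℤ) = -(Pi.single i 1 + Pi.single j 1) + (c : Fin 3 → ℤ)) :
    k ≠ i ∧ k ≠ j ∧ c = 1 := by
  have h1 := congrFun h k
  have h2 := congrFun h i
  have h3 := congrFun h j
  by_cases hki : k = i
  · exfalso
    subst hki
    simp [Pi.single_apply, hij, Ne.symm hij] at h1 h3
    omega
  · by_cases hkj : k = j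
    · exfalso
      subst hkj
      simp [Pi.single_apply, hij, Ne.symm hij, hki] at h1 h2
      omega
    · refine ⟨hki, hkj, ?_⟩
      simp [Pi.single_apply, hki, hkj, Ne.symm hki, Ne.symm hkj] at h1
      omega

lemma Lm (i j m k : Fin 3) (hm : ({i, j, m} : Finset (Fin 3)) = Finset.univ)
    (h1 : k ≠ i) (h2 : k ≠ j) : k = m := by
  revert hm h1 h2
  revert i j m k; decide

lemma Lsum (i j m : Fin 3) (hm : ({i, j, m} : Finset (Fin 3)) = Finset.univ) (hij : i ≠ j) :
    Pi.single i (1:ℤ) + Pi.single j (1:ℤ) + Pi.single m (1:ℤ) = (1 : Fin 3 → ℤ) := by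
  have him : i ≠ m ∧ j ≠ m := by revert i j m; decide
  obtain ⟨him, hjm⟩ := him
  funext t
  have ht : t = i ∨ t = j ∨ t = m := by
    have h := Finset.mem_univ t
    rw [← hm] at h
    simpa using h
  rcases ht with rfl | rfl | rfl <;>
    simp [Pi.single_apply, hij, him, hjm, Ne.symm hij, Ne.symm him, Ne.symm hjm]

lemma core (a b : Fin 3 → ℤ) (i j m k l : Fin 3)
    (hij : i ≠ j) (hm : ({i, j, m} : Finset (Fin 3)) = Finset.univ)
    (hkl : k ≠ l) :
    ({Phi a, Phi a + Uv i, Phi a + Uv i + Uv j} : Set V2)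
      = {Phi b, Phi b + Uv k, Phi b + Uv k + Uv l} ↔
      ∃ n : ℤ,
        (b = a + n • (1 : Fin 3 → ℤ) ∧ (k, l) = (i, j)) ∨
        (b = a + Pi.single i 1 + n • (1 : Fin 3 → ℤ) ∧ (k, l) = (j, m)) ∨
        (b = a - Pi.single m 1 + n • (1 : Fin 3 → ℤ) ∧ (k, l) = (m, i)) := by
  have hcast : ∀ (n : ℤ), n • (1 : Fin 3 → ℤ) = (n : Fin 3 → ℤ) := fun n => by
    rw [zsmul_eq_mul, mul_one]
  simp only [hcast]
  have hs := Lsum i j m hm hij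
  rw [show Phi a + Uv i = Phi (a + Pi.single i 1) from (Phi_add_single a i).symm,
      show Phi (a + Pi.single i 1) + Uv j = Phi (a + Pi.single i 1 + Pi.single j 1) from
        (Phi_add_single (a + Pi.single i 1) j).symm,
      show Phi b + Uv k = Phi (b + Pi.single k 1) from (Phi_add_single b k).symm,
      show Phi (b + Pi.single k 1) + Uv l = Phi (b + Pi.single k 1 + Pi.single l 1) from
        (Phi_add_single (b + Pi.single k 1) l).symm]
  constructor
  · intro h
    have hB : Phi b = Phi a ∨ Phi b = Phi (a + Pi.single i 1)
        ∨ Phi b = Phi (a + Pi.single i 1 + Pi.single j 1) := by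
      have : Phi b ∈ ({Phi a, Phi (a + Pi.single i 1),
          Phi (a + Pi.single i 1 + Pi.single j 1)} : Set V2) := by
        rw [h]; simp
      simpa only [Set.mem_insert_iff, Set.mem_singleton_iff] using this
    have hK : Phi (b + Pi.single k 1) = Phi a
        ∨ Phi (b + Pi.single k 1) = Phi (a + Pi.single i 1)
        ∨ Phi (b + Pi.single k 1) = Phi (a + Pi.single i 1 + Pi.single j 1) := by
      have : Phi (b + Pi.single k 1) ∈ ({Phi a, Phi (a + Pi.single i 1),
          Phi (a + Pi.single i 1 + Pi.single j 1)} : Set V2) := by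
        rw [h]; simp
      simpa only [Set.mem_insert_iff, Set.mem_singleton_iff] using this
    have hL : Phi (b + Pi.single k 1 + Pi.single l 1) = Phi a
        ∨ Phi (b + Pi.single k 1 + Pi.single l 1) = Phi (a + Pi.single i 1)
        ∨ Phi (b + Pi.single k 1 + Pi.single l 1) = Phi (a + Pi.single i 1 + Pi.single j 1) := by
      have : Phi (b + Pi.single k 1 + Pi.single l 1) ∈ ({Phi a, Phi (a + Pi.single i 1),
          Phi (a + Pi.single i 1 + Pi.single j 1)} : Set V2) := by
        rw [h]; simp
      simpa only [Set.mem_insert_iff, Set.mem_singleton_iff] using this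
    rcases hB with hB | hB | hB
    · obtain ⟨n0, e0⟩ := (Phi_eq_iff _ _).1 hB
      rcases hK with hK | hK | hK
      · obtain ⟨n1, e1⟩ := (Phi_eq_iff _ _).1 hK
        exact absurd (show Pi.single k (1:ℤ) = ((n0 - n1 : ℤ) : Fin 3 → ℤ) by push_cast; linear_combination e0 - e1) (L0 k _)
      · obtain ⟨n1, e1⟩ := (Phi_eq_iff _ _).1 hK
        rcases hL with hL | hL | hL
        · obtain ⟨n2, e2⟩ := (Phi_eq_iff _ _).1 hL
          exact absurd (show Pi.single k (1:ℤ) + Pi.single l 1 = ((n0 - n2 : ℤ) : Fin 3 → ℤ) by push_cast; linear_combination e0 - e2) (L5 k l _ hkl)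
        · obtain ⟨n2, e2⟩ := (Phi_eq_iff _ _).1 hL
          exact absurd (show Pi.single l (1:ℤ) = ((n1 - n2 : ℤ) : Fin 3 → ℤ) by push_cast; linear_combination e1 - e2) (L0 l _)
        · obtain ⟨n2, e2⟩ := (Phi_eq_iff _ _).1 hL
          have hk := L1 k i (n0 - n1) (by push_cast; linear_combination e0 - e1)
          have hl := L1 l j (n1 - n2) (by push_cast; linear_combination e1 - e2)
          refine ⟨-n0, Or.inl ⟨by push_cast; linear_combination -e0, ?_⟩⟩
          rw [hk.1, hl.1]
      · obtain ⟨n1, e1⟩ := (Phi_eq_iff _ _).1 hK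
        rcases hL with hL | hL | hL
        · obtain ⟨n2, e2⟩ := (Phi_eq_iff _ _).1 hL
          exact absurd (show Pi.single k (1:ℤ) + Pi.single l 1 = ((n0 - n2 : ℤ) : Fin 3 → ℤ) by push_cast; linear_combination e0 - e2) (L5 k l _ hkl)
        · obtain ⟨n2, e2⟩ := (Phi_eq_iff _ _).1 hL
          exact absurd (show Pi.single k (1:ℤ) = Pi.single i 1 + Pi.single j 1 + ((n0 - n1 : ℤ) : Fin 3 → ℤ) by push_cast; linear_combination e0 - e1) (L3 k i j _ hij)
        · obtain ⟨n2, e2⟩ := (Phi_eq_iff _ _).1 hL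
          exact absurd (show Pi.single l (1:ℤ) = ((n1 - n2 : ℤ) : Fin 3 → ℤ) by push_cast; linear_combination e1 - e2) (L0 l _)
    · obtain ⟨n0, e0⟩ := (Phi_eq_iff _ _).1 hB
      rcases hK with hK | hK | hK
      · obtain ⟨n1, e1⟩ := (Phi_eq_iff _ _).1 hK
        rcases hL with hL | hL | hL
        · obtain ⟨n2, e2⟩ := (Phi_eq_iff _ _).1 hL
          exact absurd (show Pi.single l (1:ℤ) = ((n1 - n2 : ℤ) : Fin 3 → ℤ) by push_cast; linear_combination e1 - e2) (L0 l _)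
        · obtain ⟨n2, e2⟩ := (Phi_eq_iff _ _).1 hL
          exact absurd (show Pi.single k (1:ℤ) + Pi.single l 1 = ((n0 - n2 : ℤ) : Fin 3 → ℤ) by push_cast; linear_combination e0 - e2) (L5 k l _ hkl)
        · obtain ⟨n2, e2⟩ := (Phi_eq_iff _ _).1 hL
          exact absurd (show Pi.single k (1:ℤ) = -Pi.single i 1 + ((n0 - n1 : ℤ) : Fin 3 → ℤ) by push_cast; linear_combination e0 - e1) (L2 k i _)
      · obtain ⟨n1, e1⟩ := (Phi_eq_iff _ _).1 hK
        exact absurd (show Pi.single k (1:ℤ) = ((n0 - n1 : ℤ) : Fin 3 → ℤ) by push_cast; linear_combination e0 - e1) (L0 k _)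
      · obtain ⟨n1, e1⟩ := (Phi_eq_iff _ _).1 hK
        rcases hL with hL | hL | hL
        · obtain ⟨n2, e2⟩ := (Phi_eq_iff _ _).1 hL
          have hk := L1 k j (n0 - n1) (by push_cast; linear_combination e0 - e1)
          have hl := L4 l i j (n1 - n2) hij (by push_cast; linear_combination e1 - e2)
          have hlm : l = m := Lm i j m l hm hl.1 hl.2.1
          refine ⟨-n0, Or.inr (Or.inl ⟨by push_cast; linear_combination -e0, ?_⟩)⟩
          rw [hk.1, hlm]
        · obtain ⟨n2, e2⟩ := (Phi_eq_iff _ _).1 hL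
          exact absurd (show Pi.single k (1:ℤ) + Pi.single l 1 = ((n0 - n2 : ℤ) : Fin 3 → ℤ) by push_cast; linear_combination e0 - e2) (L5 k l _ hkl)
        · obtain ⟨n2, e2⟩ := (Phi_eq_iff _ _).1 hL
          exact absurd (show Pi.single l (1:ℤ) = ((n1 - n2 : ℤ) : Fin 3 → ℤ) by push_cast; linear_combination e1 - e2) (L0 l _)
    · obtain ⟨n0, e0⟩ := (Phi_eq_iff _ _).1 hB
      rcases hK with hK | hK | hK
      · obtain ⟨n1, e1⟩ := (Phi_eq_iff _ _).1 hK
        rcases hL with hL | hL | hL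
        · obtain ⟨n2, e2⟩ := (Phi_eq_iff _ _).1 hL
          exact absurd (show Pi.single l (1:ℤ) = ((n1 - n2 : ℤ) : Fin 3 → ℤ) by push_cast; linear_combination e1 - e2) (L0 l _)
        · obtain ⟨n2, e2⟩ := (Phi_eq_iff _ _).1 hL
          have hk := L4 k i j (n0 - n1) hij (by push_cast; linear_combination e0 - e1)
          have hkm : k = m := Lm i j m k hm hk.1 hk.2.1
          have hl := L1 l i (n1 - n2) (by push_cast; linear_combination e1 - e2)
          refine ⟨1 - n0, Or.inr (Or.inr ⟨by push_cast; linear_combination -e0 + hs, ?_⟩)⟩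
          rw [hkm, hl.1]
        · obtain ⟨n2, e2⟩ := (Phi_eq_iff _ _).1 hL
          exact absurd (show Pi.single k (1:ℤ) + Pi.single l 1 = ((n0 - n2 : ℤ) : Fin 3 → ℤ) by push_cast; linear_combination e0 - e2) (L5 k l _ hkl)
      · obtain ⟨n1, e1⟩ := (Phi_eq_iff _ _).1 hK
        rcases hL with hL | hL | hL
        · obtain ⟨n2, e2⟩ := (Phi_eq_iff _ _).1 hL
          exact absurd (show Pi.single k (1:ℤ) = -Pi.single j 1 + ((n0 - n1 : ℤ) : Fin 3 → ℤ) by push_cast; linear_combination e0 - e1) (L2 k j _)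
        · obtain ⟨n2, e2⟩ := (Phi_eq_iff _ _).1 hL
          exact absurd (show Pi.single l (1:ℤ) = ((n1 - n2 : ℤ) : Fin 3 → ℤ) by push_cast; linear_combination e1 - e2) (L0 l _)
        · obtain ⟨n2, e2⟩ := (Phi_eq_iff _ _).1 hL
          exact absurd (show Pi.single k (1:ℤ) + Pi.single l 1 = ((n0 - n2 : ℤ) : Fin 3 → ℤ) by push_cast; linear_combination e0 - e2) (L5 k l _ hkl)
      · obtain ⟨n1, e1⟩ := (Phi_eq_iff _ _).1 hK
        exact absurd (show Pi.single k (1:ℤ) = ((n0 - n1 : ℤ) : Fin 3 → ℤ) by push_cast; linear_combination e0 - e1) (L0 k _)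
  · rintro ⟨n, hcase | hcase | hcase⟩
    · obtain ⟨hb, hklp⟩ := hcase
      rw [Prod.mk.injEq] at hklp
      rw [hklp.1, hklp.2]
      have q0 : Phi b = Phi a := (Phi_eq_iff _ _).2 ⟨-n, by push_cast; linear_combination -hb⟩
      have q1 : Phi (b + Pi.single i 1) = Phi (a + Pi.single i 1) :=
        (Phi_eq_iff _ _).2 ⟨-n, by push_cast; linear_combination -hb⟩
      have q2 : Phi (b + Pi.single i 1 + Pi.single j 1)
          = Phi (a + Pi.single i 1 + Pi.single j 1) :=
        (Phi_eq_iff _ _).2 ⟨-n, by push_cast; linear_combination -hb⟩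
      rw [q0, q1, q2]
    · obtain ⟨hb, hklp⟩ := hcase
      rw [Prod.mk.injEq] at hklp
      rw [hklp.1, hklp.2]
      have q0 : Phi b = Phi (a + Pi.single i 1) :=
        (Phi_eq_iff _ _).2 ⟨-n, by push_cast; linear_combination -hb⟩
      have q1 : Phi (b + Pi.single j 1) = Phi (a + Pi.single i 1 + Pi.single j 1) :=
        (Phi_eq_iff _ _).2 ⟨-n, by push_cast; linear_combination -hb⟩
      have q2 : Phi (b + Pi.single j 1 + Pi.single m 1) = Phi a :=
        (Phi_eq_iff _ _).2 ⟨-n - 1, by push_cast; linear_combination -hb - hs⟩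
      rw [q0, q1, q2]
      ext x
      simp only [Set.mem_insert_iff, Set.mem_singleton_iff]
      tauto
    · obtain ⟨hb, hklp⟩ := hcase
      rw [Prod.mk.injEq] at hklp
      rw [hklp.1, hklp.2]
      have q0 : Phi b = Phi (a + Pi.single i 1 + Pi.single j 1) :=
        (Phi_eq_iff _ _).2 ⟨1 - n, by push_cast; linear_combination -hb + hs⟩
      have q1 : Phi (b + Pi.single m 1) = Phi a :=
        (Phi_eq_iff _ _).2 ⟨-n, by push_cast; linear_combination -hb⟩
      have q2 : Phi (b + Pi.single m 1 + Pi.single i 1) = Phi (a + Pi.single i 1) :=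
        (Phi_eq_iff _ _).2 ⟨-n, by push_cast; linear_combination -hb⟩
      rw [q0, q1, q2]
      ext x
      simp only [Set.mem_insert_iff, Set.mem_singleton_iff]
      tauto

end Aux

/-- π(T(a;i,j)) = π(T(b;k,l)) iff (b,(k,l)) is, for some n ∈ ℤ,
(a+n𝟙,(i,j)), (a+eᵢ+n𝟙,(j,m)) or (a−e_m+n𝟙,(m,i)), where m is the remaining index. -/
theorem stmt1 (a b : Fin 3 → ℤ) (i j m k l : Fin 3)
    (hij : i ≠ j) (hm : ({i, j, m} : Finset (Fin 3)) = Finset.univ)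
    (hkl : k ≠ l) :
    flat3 a i j = flat3 b k l ↔
      ∃ n : ℤ,
        (b = a + n • (1 : Fin 3 → ℤ) ∧ (k, l) = (i, j)) ∨
        (b = a + Pi.single i 1 + n • (1 : Fin 3 → ℤ) ∧ (k, l) = (j, m)) ∨
        (b = a - Pi.single m 1 + n • (1 : Fin 3 → ℤ) ∧ (k, l) = (m, i)) := by
  rw [flat3_eq_iff, hull_tri_iff _ _ i j k l hij hkl]
  exact core a b i j m k l hij hm hkl
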